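/- arXiv:2411.11851 — 4 statements merged into one kernel-verified Lean document; each statement's English description precedes it below -/
import Mathlib

section
/- For all real numbers x ≥ 3 and y ≥ 2, (x-1)·√((x-1)/x) + √((x+y-2)/(x·y)) − (x-2)·√((x-2)/(x-1)) − √((x+y-3)/((x-1)·y)) > √5/(2·√2). -/
private lemma sqrt_const_lt : Real.sqrt 5 / (2 * Real.sqrt 2) < 3953 / 5000 := by
  rw [div_lt_iff₀ (by positivity)]
  nlinarith [Real.sq_sqrt (show (0:ℝ) ≤ 5 by norm_num),
    Real.sq_sqrt (show (0:ℝ) ≤ 2 by norm_num),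
    Real.sqrt_nonneg 5, Real.sqrt_pos.mpr (show (0:ℝ) < 2 by norm_num),
    sq_nonneg (Real.sqrt 5 - 3953 / 2500 * Real.sqrt 2)]

private lemma key2aux (a b d : ℝ) (ha0 : 0 < a) (hb0 : 0 < b) (hd0 : 0 ≤ d)
    (hxb : a ^ 2 = b ^ 2 + 1) (hdb : d ^ 2 = b ^ 2 - 1) (hbb : 2 ≤ b ^ 2) :
    3953 / 5000 * (a * b) ≤ b ^ 4 + b - a * d ^ 3 - a := by
  have had2 : (a * d) ^ 2 = b ^ 4 - 1 := by rw [mul_pow, hxb, hdb]; ring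
  have had : a * d * (8 * b ^ 6) ≤ 8 * b ^ 8 - 4 * b ^ 4 - 1 := by
    have hrhs : (0:ℝ) ≤ 8 * b ^ 8 - 4 * b ^ 4 - 1 := by
      linarith [hbb, sq_nonneg (b ^ 2 - 2), sq_nonneg (b ^ 4 - 4)]
    refine le_of_pow_le_pow_left₀ two_ne_zero hrhs ?_
    rw [show (a * d * (8 * b ^ 6)) ^ 2 = (a * d) ^ 2 * (64 * b ^ 12) by ring, had2]
    linarith [pow_nonneg hb0.le 4]
  have haub : a * (16 * b ^ 5) ≤ 16 * b ^ 6 + 8 * b ^ 4 - 2 * b ^ 2 + 1 := by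
    have hrhs : (0:ℝ) ≤ 16 * b ^ 6 + 8 * b ^ 4 - 2 * b ^ 2 + 1 := by
      linarith [mul_nonneg (sub_nonneg.2 hbb) (sq_nonneg b), pow_nonneg hb0.le 6,
        pow_nonneg hb0.le 4, sq_nonneg b]
    refine le_of_pow_le_pow_left₀ two_ne_zero hrhs ?_
    rw [show (a * (16 * b ^ 5)) ^ 2 = a ^ 2 * (256 * b ^ 10) by ring, hxb]
    linarith [sq_nonneg (10 * b ^ 2 - 1)]
  have hc0 : (0:ℝ) ≤ b ^ 2 - 2 := by linarith
  have hE : (0:ℝ) ≤ 16752 * b ^ 8 + 8376 * b ^ 6 - 32094 * b ^ 4 + 6047 * b ^ 2 - 10000 := by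
    linarith [hc0, sq_nonneg (b ^ 2 - 2), mul_nonneg hc0 (sq_nonneg (b ^ 2 - 2)),
      sq_nonneg ((b ^ 2 - 2) ^ 2)]
  have hO : b * (40000 * b ^ 4 - 10000 * b ^ 2 + 5000)
      ≤ 16752 * b ^ 8 + 8376 * b ^ 6 - 32094 * b ^ 4 + 6047 * b ^ 2 - 10000 := by
    refine le_of_pow_le_pow_left₀ two_ne_zero hE ?_
    have hb2sq : b ^ 2 * (40000 * b ^ 4 - 10000 * b ^ 2 + 5000) ^ 2
        ≤ (16752 * b ^ 8 + 8376 * b ^ 6 - 32094 * b ^ 4 + 6047 * b ^ 2 - 10000) ^ 2 := by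
      linarith [pow_nonneg hc0 1, pow_nonneg hc0 2, pow_nonneg hc0 3, pow_nonneg hc0 4,
        pow_nonneg hc0 5, pow_nonneg hc0 6, pow_nonneg hc0 7, pow_nonneg hc0 8]
    calc (b * (40000 * b ^ 4 - 10000 * b ^ 2 + 5000)) ^ 2
        = b ^ 2 * (40000 * b ^ 4 - 10000 * b ^ 2 + 5000) ^ 2 := by ring
      _ ≤ _ := hb2sq
  have hP : (0:ℝ) ≤ 16752 * b ^ 8 + 8376 * b ^ 6 - 40000 * b ^ 5 - 32094 * b ^ 4
      + 10000 * b ^ 3 + 6047 * b ^ 2 - 5000 * b - 10000 := by linarith [hO]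
  have hd3 : a * d ^ 3 = (a * d) * (b ^ 2 - 1) := by
    rw [show d ^ 3 = d * d ^ 2 by ring, hdb]; ring
  have hm1 : (0:ℝ) ≤ 10000 * (b ^ 2 - 1) := by linarith
  have prod1 : 0 ≤ (10000 * (b ^ 2 - 1)) * ((8 * b ^ 8 - 4 * b ^ 4 - 1) - a * d * (8 * b ^ 6)) :=
    mul_nonneg hm1 (by linarith)
  have hm2 : (0:ℝ) ≤ 5000 * b + 3953 * b ^ 2 := by positivity
  have prod2 : 0 ≤ (5000 * b + 3953 * b ^ 2)
      * ((16 * b ^ 6 + 8 * b ^ 4 - 2 * b ^ 2 + 1) - a * (16 * b ^ 5)) :=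
    mul_nonneg hm2 (by linarith)
  have hiden : 80000 * b ^ 6 * ((b ^ 4 + b - (a * d) * (b ^ 2 - 1) - a) - 3953 / 5000 * (a * b))
      = (10000 * (b ^ 2 - 1)) * ((8 * b ^ 8 - 4 * b ^ 4 - 1) - a * d * (8 * b ^ 6))
        + (5000 * b + 3953 * b ^ 2)
          * ((16 * b ^ 6 + 8 * b ^ 4 - 2 * b ^ 2 + 1) - a * (16 * b ^ 5))
        + (16752 * b ^ 8 + 8376 * b ^ 6 - 40000 * b ^ 5 - 32094 * b ^ 4
          + 10000 * b ^ 3 + 6047 * b ^ 2 - 5000 * b - 10000) := by ring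
  have h80 : (0:ℝ) < 80000 * b ^ 6 := by positivity
  have hsum : 0 ≤ 80000 * b ^ 6
      * ((b ^ 4 + b - (a * d) * (b ^ 2 - 1) - a) - 3953 / 5000 * (a * b)) := by
    rw [hiden]; linarith [prod1, prod2, hP]
  have hfin : 0 ≤ (b ^ 4 + b - (a * d) * (b ^ 2 - 1) - a) - 3953 / 5000 * (a * b) :=
    nonneg_of_mul_nonneg_right hsum h80
  rw [hd3]; linarith [hfin]

set_option maxHeartbeats 1000000 in
theorem stmt3 (x y : ℝ) (hx : 3 ≤ x) (hy : 2 ≤ y) :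
    (x - 1) * Real.sqrt ((x - 1) / x) + Real.sqrt ((x + y - 2) / (x * y))
      - (x - 2) * Real.sqrt ((x - 2) / (x - 1)) - Real.sqrt ((x + y - 3) / ((x - 1) * y))
      > Real.sqrt 5 / (2 * Real.sqrt 2) := by
  have hx0 : (0:ℝ) < x := by linarith
  have hx1 : (0:ℝ) < x - 1 := by linarith
  have hx2 : (0:ℝ) ≤ x - 2 := by linarith
  have hy0 : (0:ℝ) < y := by linarith
  set a := Real.sqrt x with ha_def
  set b := Real.sqrt (x - 1) with hb_def
  set d := Real.sqrt (x - 2) with hd_def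
  have ha2 : a ^ 2 = x := Real.sq_sqrt hx0.le
  have hb2 : b ^ 2 = x - 1 := Real.sq_sqrt hx1.le
  have hd2 : d ^ 2 = x - 2 := Real.sq_sqrt hx2
  have ha0 : 0 < a := Real.sqrt_pos.mpr hx0
  have hb0 : 0 < b := Real.sqrt_pos.mpr hx1
  have hd0 : 0 ≤ d := Real.sqrt_nonneg _
  have hbb : 2 ≤ b ^ 2 := by rw [hb2]; linarith
  have hab : b < a := Real.sqrt_lt_sqrt hx1.le (by linarith)
  have e1 : Real.sqrt ((x - 1) / x) = b / a := Real.sqrt_div hx1.le x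
  have e2 : Real.sqrt ((x - 2) / (x - 1)) = d / b := Real.sqrt_div hx2 (x - 1)
  -- Step 1: the y-terms
  set u := Real.sqrt ((x + y - 2) / (x * y)) with hu_def
  set v := Real.sqrt ((x + y - 3) / ((x - 1) * y)) with hv_def
  have hu2 : u ^ 2 = (x + y - 2) / (x * y) :=
    Real.sq_sqrt (div_nonneg (by linarith) (mul_pos hx0 hy0).le)
  have hv2 : v ^ 2 = (x + y - 3) / ((x - 1) * y) :=
    Real.sq_sqrt (div_nonneg (by linarith) (mul_pos hx1 hy0).le)
  have hu0 : 0 < u := Real.sqrt_pos.mpr (div_pos (by linarith) (mul_pos hx0 hy0))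
  have hv0 : 0 ≤ v := Real.sqrt_nonneg _
  have h6 : (0:ℝ) ≤ x * y + 2 * y - 4 := by
    linarith [mul_nonneg (show (0:ℝ) ≤ x - 3 by linarith) (show (0:ℝ) ≤ y - 2 by linarith)]
  have h7 : (0:ℝ) ≤ x * y + y - 4 := by
    linarith [mul_nonneg (show (0:ℝ) ≤ x - 3 by linarith) (show (0:ℝ) ≤ y - 2 by linarith)]
  have hu_lb : (y - 2) / y * (1 / a) ≤ u := by
    rw [hu_def, Real.le_sqrt (mul_nonneg (div_nonneg (by linarith) hy0.le)
      (one_div_nonneg.2 ha0.le)) (div_nonneg (by linarith) (mul_pos hx0 hy0).le)]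
    rw [div_mul_div_comm, div_pow,
      div_le_div_iff₀ (pow_pos (mul_pos hy0 ha0) 2) (mul_pos hx0 hy0)]
    rw [show (y * a) ^ 2 = y ^ 2 * x by rw [mul_pow, ha2]]
    linarith [mul_nonneg (mul_pos hx0 hy0).le h6]
  have hv_lb : (y - 2) / y * (1 / b) ≤ v := by
    rw [hv_def, Real.le_sqrt (mul_nonneg (div_nonneg (by linarith) hy0.le)
      (one_div_nonneg.2 hb0.le)) (div_nonneg (by linarith) (mul_pos hx1 hy0).le)]
    rw [div_mul_div_comm, div_pow,
      div_le_div_iff₀ (pow_pos (mul_pos hy0 hb0) 2) (mul_pos hx1 hy0)]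
    rw [show (y * b) ^ 2 = y ^ 2 * (x - 1) by rw [mul_pow, hb2]]
    linarith [mul_nonneg (mul_pos hx1 hy0).le h7]
  have key1 : v - u ≤ 1 / b - 1 / a := by
    have hpq : 0 ≤ 1 / b - 1 / a := by
      have := one_div_le_one_div_of_le hb0 hab.le
      linarith
    have hdiff : v ^ 2 - u ^ 2 = (y - 2) / y * ((1 / b) ^ 2 - (1 / a) ^ 2) := by
      rw [hu2, hv2, div_pow, div_pow, one_pow, ha2, hb2]
      field_simp
      ring
    have hA : 0 ≤ (1 / b - 1 / a) * ((u + v) - ((y - 2) / y * (1 / b) + (y - 2) / y * (1 / a))) :=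
      mul_nonneg hpq (by linarith)
    have hmul : (v - u) * (u + v) ≤ (1 / b - 1 / a) * (u + v) := by linarith [hA, hdiff]
    exact le_of_mul_le_mul_right hmul (by linarith)
  -- Step 2: the x-terms
  have key2 : 3953 / 5000 * (a * b) ≤ b ^ 4 + b - a * d ^ 3 - a :=
    key2aux a b d ha0 hb0 hd0 (by rw [ha2, hb2]; ring) (by rw [hd2, hb2]; ring) hbb
  -- assemble
  have hfrac : (x - 1) * (b / a) - (x - 2) * (d / b) + (1 / a - 1 / b)
      = (b ^ 4 + b - a * d ^ 3 - a) / (a * b) := by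
    rw [show x - 1 = b ^ 2 from hb2.symm, show x - 2 = d ^ 2 from hd2.symm]
    field_simp
    ring
  have hmain : 3953 / 5000 ≤ (x - 1) * (b / a) - (x - 2) * (d / b) + (1 / a - 1 / b) := by
    rw [hfrac, le_div_iff₀ (mul_pos ha0 hb0)]
    linarith [key2]
  rw [e1, e2]
  calc Real.sqrt 5 / (2 * Real.sqrt 2) < 3953 / 5000 := sqrt_const_lt
    _ ≤ (x - 1) * (b / a) - (x - 2) * (d / b) + (1 / a - 1 / b) := hmain
    _ ≤ (x - 1) * (b / a) + u - (x - 2) * (d / b) - v := by linarith [key1]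
end

section
/- A connected graph G of order n ≥ 2 has metric dimension 1 if and only if G is isomorphic to the path graph P_n. -/
open scoped Classical

/-- Degree of a vertex. -/
noncomputable def deg {V : Type*} [Fintype V] (G : SimpleGraph V) (v : V) : ℕ :=
  (Finset.univ.filter (fun u => G.Adj v u)).card

/-- First Zagreb index: sum of squares of degrees. -/
noncomputable def M1 {V : Type*} [Fintype V] (G : SimpleGraph V) : ℕ :=
  ∑ v, (deg G v) ^ 2

/-- Second Zagreb index: sum over edges of products of endpoint degrees. -/
noncomputable def M2 {V : Type*} [Fintype V] (G : SimpleGraph V) : ℕ :=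
  ∑ e ∈ G.edgeFinset,
    Sym2.lift ⟨fun u v => deg G u * deg G v, fun u v => Nat.mul_comm _ _⟩ e

/-- Atom-bond connectivity index. -/
noncomputable def ABC {V : Type*} [Fintype V] (G : SimpleGraph V) : ℝ :=
  ∑ e ∈ G.edgeFinset,
    Sym2.lift ⟨fun u v =>
      Real.sqrt (((deg G u : ℝ) + (deg G v : ℝ) - 2) / ((deg G u : ℝ) * (deg G v : ℝ))),
      fun u v => by dsimp only; rw [add_comm ((deg G u : ℝ)), mul_comm ((deg G u : ℝ))]⟩ e

/-- A set of vertices is resolving if every pair of distinct vertices is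
distinguished by its distance to some member of the set. -/
def IsResolving {V : Type*} [Fintype V] (G : SimpleGraph V) (S : Finset V) : Prop :=
  ∀ u v : V, u ≠ v → ∃ s ∈ S, G.dist u s ≠ G.dist v s

/-- The metric dimension: minimum size of a resolving set. -/
noncomputable def metricDim {V : Type*} [Fintype V] (G : SimpleGraph V) : ℕ :=
  sInf {k | ∃ S : Finset V, IsResolving G S ∧ S.card = k}

/-- The star graph on `n` vertices: vertex `0` is adjacent to all others. -/
def starGraph (n : ℕ) : SimpleGraph (Fin n) where
  Adj u v := u ≠ v ∧ (u.val = 0 ∨ v.val = 0)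
  symm := ⟨by intro u v h; exact ⟨h.1.symm, h.2.symm⟩⟩
  loopless := ⟨fun v h => h.1 rfl⟩

open SimpleGraph

lemma iso_dist {V W : Type*} {G : SimpleGraph V} {G' : SimpleGraph W} (f : G ≃g G')
    (hG : G.Connected) (u v : V) : G'.dist (f u) (f v) = G.dist u v := by
  apply le_antisymm
  · obtain ⟨p, hp⟩ := (hG u v).exists_walk_length_eq_dist
    calc G'.dist (f u) (f v) ≤ (p.map f.toHom).length := dist_le _
      _ = G.dist u v := by rw [Walk.length_map, hp]
  · have hr' : G'.Reachable (f u) (f v) := (hG u v).map f.toHom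
    obtain ⟨p, hp⟩ := hr'.exists_walk_length_eq_dist
    calc G.dist u v ≤ ((p.map f.symm.toHom).copy (f.symm_apply_apply u) (f.symm_apply_apply v)).length := dist_le _
      _ = G'.dist (f u) (f v) := by rw [Walk.length_copy, Walk.length_map, hp]

lemma pg_walk {n : ℕ} {u v : Fin n} (p : (pathGraph n).Walk u v) :
    (u.val : ℤ) - v.val ≤ p.length ∧ (v.val : ℤ) - u.val ≤ p.length := by
  induction p with
  | nil => simp
  | cons h q ih =>
    rw [pathGraph_adj] at h
    rw [Walk.length_cons]
    push_cast
    omega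

lemma pathGraph_dist_zero {n : ℕ} (hn : 0 < n) (v : Fin n) :
    (pathGraph n).dist v ⟨0, hn⟩ = v.val := by
  have hc : (pathGraph n).Connected := by
    obtain ⟨m, rfl⟩ : ∃ m, n = m + 1 := ⟨n - 1, by omega⟩
    exact pathGraph_connected m
  apply le_antisymm
  · suffices H : ∀ k (hk : k < n), (pathGraph n).dist ⟨k, hk⟩ ⟨0, hn⟩ ≤ k by
      have := H v.val v.isLt
      simpa using this
    intro k
    induction k with
    | zero => intro hk; simp [SimpleGraph.dist_self]
    | succ k ih =>
      intro hk
      have hk' : k < n := by omega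
      have hadj : (pathGraph n).Adj ⟨k+1, hk⟩ ⟨k, hk'⟩ := pathGraph_adj.mpr (Or.inr rfl)
      calc (pathGraph n).dist ⟨k+1, hk⟩ ⟨0, hn⟩
          ≤ (pathGraph n).dist ⟨k+1, hk⟩ ⟨k, hk'⟩ + (pathGraph n).dist ⟨k, hk'⟩ ⟨0, hn⟩ :=
            hc.dist_triangle
        _ ≤ 1 + k := by
            gcongr
            · exact (dist_eq_one_iff_adj.mpr hadj).le
            · exact ih hk'
        _ = k + 1 := by omega
  · obtain ⟨p, hp⟩ := (hc v ⟨0, hn⟩).exists_walk_length_eq_dist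
    have := (pg_walk p).1
    have h0 : ((⟨0, hn⟩ : Fin n)).val = 0 := rfl
    omega

theorem stmt10 {V : Type*} [Fintype V] (G : SimpleGraph V) (hG : G.Connected)
    (hn : 2 ≤ Fintype.card V) :
    metricDim G = 1 ↔ Nonempty (G ≃g SimpleGraph.pathGraph (Fintype.card V)) := by
  have hn0 : 0 < Fintype.card V := by omega
  constructor
  · intro h
    have huniv : IsResolving G Finset.univ := by
      intro u v huv
      refine ⟨u, Finset.mem_univ u, ?_⟩
      have h1 : 0 < G.dist v u := hG.pos_dist_of_ne huv.symm
      rw [SimpleGraph.dist_self]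
      omega
    have hmem : 1 ∈ {k | ∃ S : Finset V, IsResolving G S ∧ S.card = k} := by
      rw [← h]
      exact Nat.sInf_mem ⟨_, Finset.univ, huniv, rfl⟩
    obtain ⟨S, hS, hcard⟩ := hmem
    obtain ⟨s, rfl⟩ := Finset.card_eq_one.mp hcard
    have hres : ∀ u v : V, u ≠ v → G.dist u s ≠ G.dist v s := by
      intro u v huv
      obtain ⟨t, ht, h'⟩ := hS u v huv
      rw [Finset.mem_singleton] at ht
      subst ht
      exact h'
    have hlt : ∀ v : V, G.dist v s < Fintype.card V := by
      intro v
      obtain ⟨p⟩ := hG v s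
      calc G.dist v s ≤ p.bypass.length := dist_le _
        _ < Fintype.card V := p.bypass_isPath.length_lt
    set f : V → Fin (Fintype.card V) := fun v => ⟨G.dist v s, hlt v⟩ with hf
    have hinj : Function.Injective f := by
      intro u v h'
      by_contra hne
      exact hres u v hne (congrArg Fin.val h')
    have hbij : Function.Bijective f :=
      (Fintype.bijective_iff_injective_and_card f).mpr ⟨hinj, by simp⟩
    have hstep : ∀ u : V, 0 < G.dist u s → ∃ w, G.Adj u w ∧ G.dist w s + 1 = G.dist u s := by
      intro u hu
      obtain ⟨p, hp⟩ := (hG u s).exists_walk_length_eq_dist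
      cases p with
      | nil => rw [Walk.length_nil] at hp; omega
      | @cons _ w _ hadj q =>
        refine ⟨w, hadj, ?_⟩
        have h1 : G.dist w s ≤ q.length := dist_le q
        have h2 : G.dist u s ≤ G.dist u w + G.dist w s := hG.dist_triangle
        have h3 : G.dist u w = 1 := dist_eq_one_iff_adj.mpr hadj
        rw [Walk.length_cons] at hp
        omega
    have hAdj : ∀ u v : V,
        (pathGraph (Fintype.card V)).Adj (f u) (f v) ↔ G.Adj u v := by
      intro u v
      rw [pathGraph_adj]
      show G.dist u s + 1 = G.dist v s ∨ G.dist v s + 1 = G.dist u s ↔ G.Adj u v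
      constructor
      · rintro (h' | h')
        · obtain ⟨w, hw, hws⟩ := hstep v (by omega)
          have : w = u := hinj (Fin.ext (by show G.dist w s = G.dist u s; omega))
          subst this
          exact hw.symm
        · obtain ⟨w, hw, hws⟩ := hstep u (by omega)
          have : w = v := hinj (Fin.ext (by show G.dist w s = G.dist v s; omega))
          subst this
          exact hw
      · intro h'
        have h1 : G.dist u s ≤ G.dist u v + G.dist v s := hG.dist_triangle
        have h2 : G.dist v s ≤ G.dist v u + G.dist u s := hG.dist_triangle
        have h3 : G.dist u v = 1 := dist_eq_one_iff_adj.mpr h'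
        have h4 : G.dist v u = 1 := dist_eq_one_iff_adj.mpr h'.symm
        have h5 : G.dist u s ≠ G.dist v s := hres u v h'.ne
        omega
    exact ⟨⟨Equiv.ofBijective f hbij, fun {u v} => hAdj u v⟩⟩
  · rintro ⟨f⟩
    set n := Fintype.card V with hnn
    let z : Fin n := ⟨0, hn0⟩
    set s := f.symm z with hs
    have hds : ∀ u : V, G.dist u s = (f u).val := by
      intro u
      have h1 := iso_dist f hG u s
      rw [hs, f.apply_symm_apply] at h1
      rw [← h1]
      exact pathGraph_dist_zero hn0 (f u)
    have hres : IsResolving G {s} := by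
      intro u v huv
      refine ⟨s, Finset.mem_singleton_self s, ?_⟩
      rw [hds u, hds v]
      intro hval
      exact huv (f.toEquiv.injective (Fin.ext hval))
    have h1 : 1 ∈ {k | ∃ S : Finset V, IsResolving G S ∧ S.card = k} :=
      ⟨{s}, hres, Finset.card_singleton s⟩
    have hle : sInf {k | ∃ S : Finset V, IsResolving G S ∧ S.card = k} ≤ 1 := Nat.sInf_le h1
    have hne0 : sInf {k | ∃ S : Finset V, IsResolving G S ∧ S.card = k} ≠ 0 := by
      intro h0
      have h0mem : 0 ∈ {k | ∃ S : Finset V, IsResolving G S ∧ S.card = k} :=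
        h0 ▸ Nat.sInf_mem ⟨1, h1⟩
      obtain ⟨S, hS, hc⟩ := h0mem
      rw [Finset.card_eq_zero] at hc
      subst hc
      obtain ⟨u, v, huv⟩ := Fintype.exists_pair_of_one_lt_card (α := V) (by omega)
      obtain ⟨t, ht, _⟩ := hS u v huv
      simp at ht
    show sInf {k | ∃ S : Finset V, IsResolving G S ∧ S.card = k} = 1
    omega
end

section
/- Let T be a tree of order n ≥ 4 with metric dimension ε(T). Then the first Zagreb index satisfies M₁(T) ≥ 4n − 7 + ε(T), with equality when T is the path P_n. -/
open scoped Classical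

lemma deg_eq_degree {V : Type*} [Fintype V] (G : SimpleGraph V) (v : V) :
    deg G v = G.degree v := by
  rw [deg, SimpleGraph.degree, SimpleGraph.neighborFinset_eq_filter]

lemma tree_path_length_eq_dist {V : Type*} {T : SimpleGraph V} (hT : T.IsTree)
    {u v : V} (p : T.Walk u v) (hp : p.IsPath) : p.length = T.dist u v := by
  obtain ⟨q, hq, hql⟩ := hT.isConnected.exists_path_of_dist u v
  rw [(hT.existsUnique_path u v).unique hp hq, hql]

open SimpleGraph Walk in
lemma helperA {V : Type*} {T : SimpleGraph V} (hT : T.IsTree)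
    {u v w : V} (hadj : T.Adj v w) (hle : T.dist u w ≤ T.dist u v) :
    ∃ p : T.Walk u v, p.IsPath ∧ p.getVert (p.length - 1) = w := by
  obtain ⟨q, hq, hql⟩ := hT.isConnected.exists_path_of_dist u w
  by_cases hvs : v ∈ q.support
  · exfalso
    have ht : (q.takeUntil v hvs).length = T.dist u v :=
      tree_path_length_eq_dist hT _ (hq.takeUntil hvs)
    have hsplit := congr_arg Walk.length (q.take_spec hvs)
    rw [Walk.length_append] at hsplit
    have hdrop : (q.dropUntil v hvs).length ≠ 0 := by
      intro h0
      exact hadj.ne (Walk.eq_of_length_eq_zero h0)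
    omega
  · refine ⟨q.concat hadj.symm, ?_, ?_⟩
    · rw [← Walk.isPath_reverse_iff, Walk.reverse_concat]
      exact ((Walk.isPath_reverse_iff q).mpr hq).cons (by
        rw [Walk.support_reverse]; simpa using hvs)
    · rw [Walk.length_concat, Nat.add_sub_cancel, Walk.concat_eq_append,
        Walk.getVert_append]
      simp

lemma exists_neighbor_dist_succ {V : Type*} [Fintype V] {T : SimpleGraph V} (hT : T.IsTree)
    {u v : V} (hne : u ≠ v) (hdeg : 2 ≤ deg T v) :
    ∃ w, T.Adj v w ∧ T.dist u w = T.dist u v + 1 := by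
  have htri : ∀ w, T.Adj v w → T.dist u w ≤ T.dist u v + 1 := by
    intro w hw
    have := hT.isConnected.dist_triangle (u := u) (v := v) (w := w)
    rwa [SimpleGraph.dist_eq_one_iff_adj.mpr hw] at this
  by_contra hcon
  push_neg at hcon
  have hle : ∀ w, T.Adj v w → T.dist u w ≤ T.dist u v := by
    intro w hw
    have h1 := htri w hw
    have h2 := hcon w hw
    omega
  -- at most one neighbor, contradicting deg ≥ 2
  obtain ⟨w1, hw1, w2, hw2, hne12⟩ := Finset.one_lt_card.mp (by omega : 1 < deg T v)
  simp only [Finset.mem_filter, Finset.mem_univ, true_and] at hw1 hw2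
  obtain ⟨p1, hp1, hg1⟩ := helperA hT hw1 (hle _ hw1)
  obtain ⟨p2, hp2, hg2⟩ := helperA hT hw2 (hle _ hw2)
  have : p1 = p2 := (hT.existsUnique_path u v).unique hp1 hp2
  subst this
  exact hne12 (hg1 ▸ hg2 ▸ rfl)

lemma dist_lt_card {V : Type*} [Fintype V] {T : SimpleGraph V} (hT : T.IsTree) (u v : V) :
    T.dist u v < Fintype.card V := by
  obtain ⟨p, hp, hl⟩ := hT.isConnected.exists_path_of_dist u v
  exact hl ▸ hp.length_lt

lemma exists_leaf_dist {V : Type*} [Fintype V] {T : SimpleGraph V} (hT : T.IsTree)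
    (u : V) : ∀ v : V, ∃ s, deg T s ≤ 1 ∧ T.dist u s = T.dist u v + T.dist v s := by
  suffices h : ∀ m : ℕ, ∀ v : V, Fintype.card V - T.dist u v ≤ m →
      ∃ s, deg T s ≤ 1 ∧ T.dist u s = T.dist u v + T.dist v s by
    intro v; exact h (Fintype.card V) v (Nat.sub_le _ _)
  intro m
  induction m with
  | zero => intro v hv; have := dist_lt_card hT u v; omega
  | succ m ih =>
    intro v hv
    by_cases hleaf : deg T v ≤ 1
    · exact ⟨v, hleaf, by simp⟩
    · by_cases huv : u = v
      · subst huv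
        -- v has degree ≥ 2; pick any neighbor w, dist u w = 1 = dist u u + 1
        obtain ⟨w, hw⟩ := (SimpleGraph.degree_pos_iff_exists_adj T u).mp
          (by rw [← deg_eq_degree]; omega)
        obtain ⟨s, hs, hds⟩ := ih w (by
          have h1 : T.dist u w = 1 := SimpleGraph.dist_eq_one_iff_adj.mpr hw
          rw [h1]
          rw [SimpleGraph.dist_self] at hv
          omega)
        refine ⟨s, hs, by simp⟩
      · obtain ⟨w, hadj, hdw⟩ := exists_neighbor_dist_succ hT huv (by omega)
        obtain ⟨s, hs, hds⟩ := ih w (by omega)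
        refine ⟨s, hs, ?_⟩
        have htri1 : T.dist u s ≤ T.dist u v + T.dist v s := hT.isConnected.dist_triangle
        have htri2 : T.dist v s ≤ T.dist v w + T.dist w s := hT.isConnected.dist_triangle
        have hvw : T.dist v w = 1 := SimpleGraph.dist_eq_one_iff_adj.mpr hadj
        omega

lemma exists_step {V : Type*} {T : SimpleGraph V} {u s : V} {k : ℕ}
    (h : T.dist u s = k + 1) :
    ∃ w, T.Adj u w ∧ T.dist w s = k := by
  obtain ⟨p, hpl⟩ := SimpleGraph.exists_walk_of_dist_ne_zero (G := T) (u := u) (v := s) (by omega)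
  rw [h] at hpl
  cases p with
  | nil => simp at hpl
  | @cons _ w _ hadj q =>
    refine ⟨w, hadj, ?_⟩
    have hq : q.length = k := by simpa using hpl
    have h1 : T.dist w s ≤ k := hq ▸ SimpleGraph.dist_le q
    obtain ⟨r, hr⟩ := SimpleGraph.Reachable.exists_walk_length_eq_dist (⟨q⟩ : T.Reachable w s)
    have h2 := SimpleGraph.dist_le (r.cons hadj)
    rw [SimpleGraph.Walk.length_cons, hr] at h2
    omega

lemma dist_to_leaf_injective {V : Type*} [Fintype V] {T : SimpleGraph V} (hT : T.IsTree)
    (hmax : ∀ v, deg T v ≤ 2) {s : V} (hs : deg T s ≤ 1) :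
    ∀ u v : V, T.dist u s = T.dist v s → u = v := by
  suffices H : ∀ k : ℕ, ∀ j ≤ k, ∀ u v : V, T.dist u s = j → T.dist v s = j → u = v by
    intro u v h
    exact H (T.dist v s) (T.dist v s) le_rfl u v h rfl
  intro k
  induction k with
  | zero =>
    intro j hj u v hu hv
    interval_cases j
    have h1 : u = s := hT.isConnected.dist_eq_zero_iff.mp hu
    have h2 : v = s := hT.isConnected.dist_eq_zero_iff.mp hv
    rw [h1, h2]
  | succ k ih =>
    intro j hj u v hu hv
    rcases Nat.lt_or_ge j (k+1) with hlt | hge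
    · exact ih j (by omega) u v hu hv
    have hj' : j = k + 1 := by omega
    subst hj'
    match k, ih with
    | 0, ih =>
      -- dist = 1 : both adjacent to s, deg s ≤ 1
      have hu' : T.Adj u s := SimpleGraph.dist_eq_one_iff_adj.mp hu
      have hv' : T.Adj v s := SimpleGraph.dist_eq_one_iff_adj.mp hv
      have hmem : ∀ x, T.Adj s x → x ∈ Finset.univ.filter (fun y => T.Adj s y) := by
        intro x hx; simp [hx]
      have := Finset.card_le_one.mp hs _ (hmem u hu'.symm) _ (hmem v hv'.symm)
      exact this
    | (k' + 1), ih =>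
      obtain ⟨wu, hwu, hdwu⟩ := exists_step hu
      obtain ⟨wv, hwv, hdwv⟩ := exists_step hv
      have hw : wu = wv := ih (k' + 1) le_rfl wu wv hdwu hdwv
      subst hw
      obtain ⟨x, hx, hdx⟩ := exists_step hdwu
      by_contra huv
      have hxu : x ≠ u := by intro h; rw [h, hu] at hdx; omega
      have hxv : x ≠ v := by intro h; rw [h, hv] at hdx; omega
      have hsub : ({u, v, x} : Finset V) ⊆ Finset.univ.filter (fun y => T.Adj wu y) := by
        intro y hy
        simp only [Finset.mem_insert, Finset.mem_singleton] at hy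
        rcases hy with rfl | rfl | rfl
        · simp [hwu.symm]
        · simp [hwv.symm]
        · simp [hx]
      have hcard : ({u, v, x} : Finset V).card = 3 := by
        rw [Finset.card_insert_of_notMem (by simp [huv, hxu.symm]),
          Finset.card_insert_of_notMem (by simp [hxv.symm])]
        simp
      have := Finset.card_le_card hsub
      rw [hcard] at this
      have := hmax wu
      rw [deg] at this
      omega

section counting
variable {V : Type*} [Fintype V] {T : SimpleGraph V}

lemma deg_pos (hT : T.IsTree) (hn : 2 ≤ Fintype.card V) (v : V) : 1 ≤ deg T v := by
  obtain ⟨u, hu⟩ := Fintype.exists_ne_of_one_lt_card (by omega) v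
  obtain ⟨p⟩ := hT.isConnected v u
  cases p with
  | nil => exact absurd rfl hu.symm
  | @cons _ w _ hadj q =>
    rw [deg, Nat.one_le_iff_ne_zero, ← Nat.pos_iff_ne_zero, Finset.card_pos]
    exact ⟨w, by simp [hadj]⟩

lemma sum_deg (hT : T.IsTree) :
    ∑ v, (deg T v : ℤ) = 2 * Fintype.card V - 2 := by
  have he := hT.card_edgeFinset (G := T)
  have hs : ∑ v, deg T v = 2 * T.edgeFinset.card := by
    simp only [deg_eq_degree]
    exact T.sum_degrees_eq_twice_card_edges
  have : (∑ v, (deg T v : ℤ)) = ((∑ v, deg T v : ℕ) : ℤ) := by push_cast; ring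
  rw [this, hs]
  push_cast
  omega

noncomputable def leafSet {V : Type*} [Fintype V] (T : SimpleGraph V) : Finset V :=
  Finset.univ.filter (fun v => deg T v = 1)

lemma main_counting (hT : T.IsTree) (hn : 2 ≤ Fintype.card V) :
    2 ≤ (leafSet T).card ∧
    4 * Fintype.card V + 2 * (leafSet T).card ≤ M1 T + 10 ∧
    ((leafSet T).card ≤ 2 → ∀ v, deg T v ≤ 2) := by
  classical
  set n := Fintype.card V
  set L := (leafSet T).card with hL
  have hd1 : ∀ v, 1 ≤ deg T v := deg_pos hT hn
  have hsd := sum_deg hT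
  -- L ≥ 2  and  #{d ≥ 3} ≤ L - 2
  have hpt1 : ∀ v ∈ Finset.univ, (if deg T v = 1 then (-1:ℤ) else 0) +
      (if 3 ≤ deg T v then (1:ℤ) else 0) ≤ (deg T v : ℤ) - 2 := by
    intro v _
    have := hd1 v
    rcases eq_or_ne (deg T v) 1 with h | h
    · simp [h]
    · have h2 : 2 ≤ deg T v := by omega
      by_cases h3 : 3 ≤ deg T v <;> simp [h, h3] <;> push_cast <;> omega
  have hsum_neg : ∑ v : V, (if deg T v = 1 then (-1:ℤ) else 0) = -L := by
    rw [hL, leafSet, ← Finset.sum_filter, Finset.sum_const]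
    simp [mul_comm]
  have hsum_three : ∑ v : V, (if 3 ≤ deg T v then (1:ℤ) else 0) =
      (Finset.univ.filter (fun v => 3 ≤ deg T v)).card := by
    rw [Finset.sum_boole]
  have hs1 := Finset.sum_le_sum hpt1
  rw [Finset.sum_add_distrib, Finset.sum_sub_distrib, hsd, hsum_neg, hsum_three] at hs1
  simp only [Finset.sum_const, Finset.card_univ, nsmul_eq_mul, mul_one] at hs1
  have hA : ((Finset.univ.filter (fun v => 3 ≤ deg T v)).card : ℤ) ≤ (L:ℤ) - 2 ∧ 2 ≤ (L:ℤ) := by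
    constructor <;> [skip; skip] <;>
    · have hcnonneg : (0:ℤ) ≤ ((Finset.univ.filter (fun v => 3 ≤ deg T v)).card : ℤ) :=
        Int.natCast_nonneg _
      omega
  refine ⟨by exact_mod_cast hA.2, ?_, ?_⟩
  · -- main inequality
    have hpt2 : ∀ v ∈ Finset.univ, 2*((deg T v:ℤ)-2) + 2*(if deg T v = 1 then (1:ℤ) else 0)
        ≤ ((deg T v:ℤ)-1)*((deg T v:ℤ)-2) := by
      intro v _
      have := hd1 v
      rcases eq_or_ne (deg T v) 1 with h | h
      · simp [h]
      · have h2 : 2 ≤ deg T v := by omega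
        simp only [h, if_false, add_zero]
        rcases eq_or_ne (deg T v) 2 with h2' | h2'
        · simp [h2']
        · have h3 : 3 ≤ deg T v := by omega
          have h3' : (3:ℤ) ≤ (deg T v : ℤ) := by exact_mod_cast h3
          nlinarith
    have hs2 := Finset.sum_le_sum hpt2
    have hlhs : ∑ v : V, (2*((deg T v:ℤ)-2) + 2*(if deg T v = 1 then (1:ℤ) else 0))
        = 2*(2*n-2) - 4*n + 2*L := by
      rw [Finset.sum_add_distrib, ← Finset.mul_sum, Finset.sum_sub_distrib, hsd]
      have : ∑ v : V, (if deg T v = 1 then (1:ℤ) else 0) = L := by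
        rw [hL, leafSet, ← Finset.sum_filter, Finset.sum_const]
        simp
      rw [← Finset.mul_sum, this]
      simp only [Finset.sum_const, Finset.card_univ, nsmul_eq_mul, mul_one]
      ring
    have hrhs : ∑ v : V, ((deg T v:ℤ)-1)*((deg T v:ℤ)-2)
        = (M1 T : ℤ) - 3*(2*n-2) + 2*n := by
      have expand : ∀ v : V, ((deg T v:ℤ)-1)*((deg T v:ℤ)-2)
          = (deg T v:ℤ)^2 - 3*(deg T v:ℤ) + 2 := by intro v; ring
      simp only [expand]
      rw [Finset.sum_add_distrib, Finset.sum_sub_distrib, ← Finset.mul_sum, hsd]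
      have hM : ∑ v : V, (deg T v:ℤ)^2 = (M1 T : ℤ) := by
        rw [M1]; push_cast; rfl
      rw [hM]
      simp only [Finset.sum_const, Finset.card_univ, nsmul_eq_mul, mul_one]
      ring
    rw [hlhs, hrhs] at hs2
    have : (4*n : ℤ) + 2*L ≤ (M1 T:ℤ) + 10 := by linarith
    exact_mod_cast this
  · -- L ≤ 2 → max degree ≤ 2
    intro hL2 v
    by_contra h3
    have hv : v ∈ Finset.univ.filter (fun v => 3 ≤ deg T v) := by
      simp; omega
    have : 0 < (Finset.univ.filter (fun v => 3 ≤ deg T v)).card := Finset.card_pos.mpr ⟨v, hv⟩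
    have h2 := hA.1
    omega

lemma M1_of_max_deg_two (hT : T.IsTree) (hn : 2 ≤ Fintype.card V)
    (hmax : ∀ v, deg T v ≤ 2) : M1 T + 6 = 4 * Fintype.card V := by
  have hd1 : ∀ v, 1 ≤ deg T v := deg_pos hT hn
  have hsd := sum_deg hT
  have hpt : ∀ v : V, ((deg T v:ℤ))^2 = 3*(deg T v:ℤ) - 2 := by
    intro v
    have h1 := hd1 v; have h2 := hmax v
    interval_cases h : (deg T v) <;> simp [h] <;> norm_num
  have hM : (M1 T : ℤ) = ∑ v : V, (deg T v:ℤ)^2 := by rw [M1]; push_cast; rfl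
  have : (M1 T : ℤ) = 3*(2*Fintype.card V - 2) - 2*Fintype.card V := by
    rw [hM]
    simp only [hpt]
    rw [Finset.sum_sub_distrib, ← Finset.mul_sum, hsd]
    simp only [Finset.sum_const, Finset.card_univ, nsmul_eq_mul, mul_one]
    ring
  have : (M1 T : ℤ) + 6 = 4 * Fintype.card V := by omega
  exact_mod_cast this

end counting

section dim
variable {V : Type*} [Fintype V] {T : SimpleGraph V}

lemma metricDim_le {S : Finset V} (h : IsResolving T S) : metricDim T ≤ S.card :=
  Nat.sInf_le ⟨S, h, rfl⟩

lemma univ_resolving (hT : T.IsTree) : IsResolving T (Finset.univ : Finset V) := by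
  intro u v huv
  refine ⟨u, Finset.mem_univ u, ?_⟩
  rw [SimpleGraph.dist_self]
  intro h
  exact (SimpleGraph.dist_ne_zero_iff_ne_and_reachable.mpr
    ⟨huv.symm, hT.isConnected v u⟩) h.symm

lemma one_le_metricDim (hT : T.IsTree) (hn : 2 ≤ Fintype.card V) : 1 ≤ metricDim T := by
  rw [Nat.one_le_iff_ne_zero]
  intro h0
  rcases Nat.sInf_eq_zero.mp h0 with hmem | hempty
  · obtain ⟨S, hres, hcard⟩ := hmem
    rw [Finset.card_eq_zero] at hcard
    subst hcard
    obtain ⟨u, v, huv⟩ := Fintype.exists_pair_of_one_lt_card (α := V) (by omega)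
    obtain ⟨s, hs, -⟩ := hres u v huv
    exact absurd hs (Finset.notMem_empty s)
  · exact absurd hempty (Set.nonempty_iff_ne_empty.mp
      ⟨Finset.univ.card, Finset.univ, univ_resolving hT, rfl⟩)

lemma leaves_resolving (hT : T.IsTree) (hn : 2 ≤ Fintype.card V) :
    IsResolving T (leafSet T) := by
  intro u v huv
  obtain ⟨s, hs1, hds⟩ := exists_leaf_dist hT u v
  have hd1 := deg_pos hT hn s
  refine ⟨s, by simp [leafSet]; omega, ?_⟩
  have : 0 < T.dist u v := hT.isConnected.pos_dist_of_ne huv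
  omega

lemma single_leaf_resolving (hT : T.IsTree) (hmax : ∀ v, deg T v ≤ 2) {s : V}
    (hs : deg T s = 1) : IsResolving T ({s} : Finset V) := by
  intro u v huv
  refine ⟨s, Finset.mem_singleton_self s, fun h => huv ?_⟩
  exact dist_to_leaf_injective hT hmax (by omega) u v h

lemma metricDim_eq_one_of_max_deg_two (hT : T.IsTree) (hn : 2 ≤ Fintype.card V)
    (hmax : ∀ v, deg T v ≤ 2) : metricDim T = 1 := by
  have h2 := (main_counting hT hn).1
  have : 0 < (leafSet T).card := by omega
  obtain ⟨s, hs⟩ := Finset.card_pos.mp this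
  rw [leafSet, Finset.mem_filter] at hs
  have hle : metricDim T ≤ 1 := by
    have := metricDim_le (single_leaf_resolving hT hmax hs.2)
    simpa using this
  have := one_le_metricDim hT hn
  omega

end dim

lemma path_deg {V : Type*} [Fintype V] {T : SimpleGraph V} {n : ℕ}
    (f : T ≃g SimpleGraph.pathGraph n) (v : V) : deg T v ≤ 2 := by
  classical
  have hmaps : ∀ u ∈ Finset.univ.filter (fun u => T.Adj v u),
      (f u).val ∈ ({(f v).val + 1, (f v).val - 1} : Finset ℕ) := by
    intro u hu
    simp only [Finset.mem_filter] at hu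
    have h := f.map_adj_iff.mpr hu.2
    rw [SimpleGraph.pathGraph_adj] at h
    simp only [Finset.mem_insert, Finset.mem_singleton]
    omega
  have hinj : Set.InjOn (fun u => (f u).val)
      (Finset.univ.filter (fun u => T.Adj v u) : Finset V) :=
    fun a _ b _ h => f.toEquiv.injective (Fin.val_injective h)
  have hle := Finset.card_le_card_of_injOn _ hmaps hinj
  calc deg T v ≤ ({(f v).val + 1, (f v).val - 1} : Finset ℕ).card := hle
    _ ≤ 2 := (Finset.card_insert_le _ _).trans (by simp)

theorem stmt12 {V : Type*} [Fintype V] (T : SimpleGraph V) (hT : T.IsTree)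
    (hn : 4 ≤ Fintype.card V) :
    4 * Fintype.card V - 7 + metricDim T ≤ M1 T ∧
      (Nonempty (T ≃g SimpleGraph.pathGraph (Fintype.card V)) →
        M1 T = 4 * Fintype.card V - 7 + metricDim T) := by
  have hn2 : 2 ≤ Fintype.card V := by omega
  obtain ⟨hL2, hineq, hLmax⟩ := main_counting hT hn2
  constructor
  · by_cases h3 : 3 ≤ (leafSet T).card
    · have hm := metricDim_le (leaves_resolving hT hn2)
      omega
    · have hmax := hLmax (by omega)
      have hM := M1_of_max_deg_two hT hn2 hmax
      have he := metricDim_eq_one_of_max_deg_two hT hn2 hmax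
      omega
  · rintro ⟨f⟩
    have hmax : ∀ v, deg T v ≤ 2 := path_deg f
    have hM := M1_of_max_deg_two hT hn2 hmax
    have he := metricDim_eq_one_of_max_deg_two hT hn2 hmax
    omega
end

section
/- Let T be a tree of order n ≥ 4 with metric dimension ε(T). Then the first Zagreb index satisfies M₁(T) ≤ n + (n−1)(n−2) + ε(T), with equality when T is the star S_n. -/
open scoped Classical

lemma exists_adj_of_connected {V : Type*} [Fintype V] (G : SimpleGraph V)
    (hconn : G.Connected) (h2 : 2 ≤ Fintype.card V) (v : V) : ∃ w, G.Adj v w := by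
  have : Nontrivial V := Fintype.one_lt_card_iff_nontrivial.mp (by omega)
  obtain ⟨w, hw⟩ := exists_ne v
  obtain ⟨p⟩ := hconn.preconnected v w
  cases p with
  | nil => exact absurd rfl hw
  | cons h q => exact ⟨_, h⟩

lemma no_leaf_adj {V : Type*} [Fintype V] (T : SimpleGraph V) (hT : T.IsTree) {c u v : V}
    (hu : u ≠ c) (hv : v ≠ c) (huv : u ≠ v) (hcu : T.Adj c u) (hcv : T.Adj c v) :
    ¬ T.Adj u v := by
  intro h
  have hp1 : h.toWalk.IsPath := SimpleGraph.Walk.IsPath.nil.cons (by simpa using huv)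
  have hp2 : (SimpleGraph.Walk.cons hcu.symm (SimpleGraph.Walk.cons hcv .nil)).IsPath := by
    refine SimpleGraph.Walk.IsPath.cons
      (SimpleGraph.Walk.IsPath.nil.cons (by simpa using hv.symm)) ?_
    simp [hu, huv]
  have heq := (hT.existsUnique_path u v).unique hp1 hp2
  have hl := congrArg SimpleGraph.Walk.length heq
  simp at hl

lemma star_case {V : Type*} [Fintype V] (T : SimpleGraph V) (hT : T.IsTree)
    (hn : 4 ≤ Fintype.card V) (c : V) (hc : ∀ u, u ≠ c → T.Adj c u) :
    M1 T = Fintype.card V + (Fintype.card V - 1) * (Fintype.card V - 2) + metricDim T := by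
  set n := Fintype.card V with hnn
  have hadj_iff : ∀ u, T.Adj c u ↔ u ≠ c := fun u => ⟨fun h => h.ne', fun h => hc u h⟩
  have hnoadj : ∀ u v : V, u ≠ c → v ≠ c → u ≠ v → ¬ T.Adj u v := by
    intro u v hu hv huv
    exact no_leaf_adj T hT hu hv huv (hc u hu) (hc v hv)
  -- degrees
  have hdegc : deg T c = n - 1 := by
    rw [deg]
    have : Finset.univ.filter (fun u => T.Adj c u) = Finset.univ.erase c := by
      ext u; simp [hadj_iff]
    rw [this, Finset.card_erase_of_mem (Finset.mem_univ c), Finset.card_univ]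
  have hdegu : ∀ u, u ≠ c → deg T u = 1 := by
    intro u hu
    rw [deg]
    have : Finset.univ.filter (fun w => T.Adj u w) = {c} := by
      ext w
      simp only [Finset.mem_filter, Finset.mem_univ, true_and, Finset.mem_singleton]
      constructor
      · intro h
        by_contra hw
        exact hnoadj u w hu hw h.ne h
      · rintro rfl; exact (hc u hu).symm
    rw [this, Finset.card_singleton]
  -- M1 value
  have hM1 : M1 T = (n-1)^2 + (n-1) := by
    rw [M1, ← Finset.add_sum_erase _ _ (Finset.mem_univ c), hdegc]
    congr 1
    rw [Finset.sum_congr rfl (fun u hu => by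
      rw [hdegu u (Finset.mem_erase.mp hu).1, one_pow]),
      Finset.sum_const, Finset.card_erase_of_mem (Finset.mem_univ c), Finset.card_univ,
      smul_eq_mul, mul_one]
  -- distances
  have hconn : T.Connected := hT.isConnected
  have hd1 : ∀ u, u ≠ c → T.dist u c = 1 := fun u hu =>
    SimpleGraph.dist_eq_one_iff_adj.mpr (hc u hu).symm
  have hd2 : ∀ u v : V, u ≠ c → v ≠ c → u ≠ v → T.dist u v = 2 := by
    intro u v hu hv huv
    have hle : T.dist u v ≤ 2 := by
      simpa using SimpleGraph.dist_le
        (SimpleGraph.Walk.cons (hc u hu).symm (SimpleGraph.Walk.cons (hc v hv) .nil))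
    have h0 : T.dist u v ≠ 0 :=
      SimpleGraph.dist_ne_zero_iff_ne_and_reachable.mpr ⟨huv, hconn.preconnected u v⟩
    have h1 : T.dist u v ≠ 1 := fun h =>
      hnoadj u v hu hv huv (SimpleGraph.dist_eq_one_iff_adj.mp h)
    omega
  have hdpos : ∀ u v : V, u ≠ v → T.dist u v ≠ 0 := fun u v huv =>
    SimpleGraph.dist_ne_zero_iff_ne_and_reachable.mpr ⟨huv, hconn.preconnected u v⟩
  -- the resolving set
  have : Nontrivial V := Fintype.one_lt_card_iff_nontrivial.mp (by omega)
  obtain ⟨u₀, hu₀⟩ := exists_ne c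
  set S₀ : Finset V := (Finset.univ.erase c).erase u₀ with hS₀
  have hmemS₀ : ∀ x, x ∈ S₀ ↔ x ≠ u₀ ∧ x ≠ c := by
    intro x; simp [hS₀, and_assoc]
  have hcardS₀ : S₀.card = n - 2 := by
    rw [hS₀, Finset.card_erase_of_mem (by simp [hu₀]),
      Finset.card_erase_of_mem (Finset.mem_univ c), Finset.card_univ]
    omega
  have hres : IsResolving T S₀ := by
    intro u v huv
    by_cases hu : u ∈ S₀
    · exact ⟨u, hu, by rw [SimpleGraph.dist_self]; exact (hdpos v u huv.symm).symm⟩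
    by_cases hv : v ∈ S₀
    · exact ⟨v, hv, by rw [SimpleGraph.dist_self]; exact hdpos u v huv⟩
    -- u, v ∈ {c, u₀}
    have hu' : u = u₀ ∨ u = c := by
      by_contra h; push_neg at h; exact hu ((hmemS₀ u).mpr ⟨h.1, h.2⟩)
    have hv' : v = u₀ ∨ v = c := by
      by_contra h; push_neg at h; exact hv ((hmemS₀ v).mpr ⟨h.1, h.2⟩)
    have hSne : S₀.Nonempty := Finset.card_pos.mp (by omega)
    obtain ⟨s, hs⟩ := hSne
    obtain ⟨hsu₀, hsc⟩ := (hmemS₀ s).mp hs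
    refine ⟨s, hs, ?_⟩
    have hds : T.dist u₀ s = 2 := hd2 u₀ s hu₀ hsc (Ne.symm hsu₀)
    have hdc : T.dist c s = 1 := by rw [SimpleGraph.dist_comm]; exact hd1 s hsc
    rcases hu' with rfl | rfl <;> rcases hv' with rfl | rfl
    · exact absurd rfl huv
    · rw [hds, hdc]; omega
    · rw [hds, hdc]; omega
    · exact absurd rfl huv
  have hub : metricDim T ≤ n - 2 := Nat.sInf_le ⟨S₀, hres, hcardS₀⟩
  have hlb : n - 2 ≤ metricDim T := by
    have hmem : metricDim T ∈ {k | ∃ S : Finset V, IsResolving T S ∧ S.card = k} :=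
      Nat.sInf_mem ⟨n - 2, S₀, hres, hcardS₀⟩
    obtain ⟨S, hS, hScard⟩ := hmem
    by_contra h
    push_neg at h
    have hcS : S.card < n - 2 := hScard ▸ h
    have h3 : 3 ≤ (Sᶜ : Finset V).card := by
      rw [Finset.card_compl]
      have := Finset.card_le_univ S
      omega
    have h2' : 2 ≤ ((Sᶜ : Finset V).erase c).card := by
      have := Finset.pred_card_le_card_erase (s := (Sᶜ : Finset V)) (a := c)
      omega
    obtain ⟨u, hu, v, hv, huv⟩ := Finset.one_lt_card.mp (by omega : 1 < ((Sᶜ : Finset V).erase c).card)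
    obtain ⟨huc, huS⟩ := Finset.mem_erase.mp hu
    obtain ⟨hvc, hvS⟩ := Finset.mem_erase.mp hv
    rw [Finset.mem_compl] at huS hvS
    obtain ⟨s, hsS, hne⟩ := hS u v huv
    have hsu : s ≠ u := fun h => huS (h ▸ hsS)
    have hsv : s ≠ v := fun h => hvS (h ▸ hsS)
    by_cases hsc : s = c
    · subst hsc
      rw [hd1 u huc, hd1 v hvc] at hne
      exact hne rfl
    · rw [hd2 u s huc hsc (Ne.symm hsu), hd2 v s hvc hsc (Ne.symm hsv)] at hne
      exact hne rfl
  have hmd : metricDim T = n - 2 := le_antisymm hub hlb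
  rw [hM1, hmd]
  obtain ⟨m, hm⟩ : ∃ m, n = m + 4 := ⟨n - 4, by omega⟩
  rw [hm]
  have e1 : m + 4 - 1 = m + 3 := rfl
  have e2 : m + 4 - 2 = m + 2 := rfl
  rw [e1, e2]; ring

theorem stmt13 {V : Type*} [Fintype V] (T : SimpleGraph V) (hT : T.IsTree)
    (hn : 4 ≤ Fintype.card V) :
    M1 T ≤ Fintype.card V + (Fintype.card V - 1) * (Fintype.card V - 2) + metricDim T ∧
      (Nonempty (T ≃g starGraph (Fintype.card V)) →
        M1 T = Fintype.card V + (Fintype.card V - 1) * (Fintype.card V - 2) + metricDim T) := by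
  set n := Fintype.card V with hnn
  by_cases hstar : ∃ c : V, ∀ u, u ≠ c → T.Adj c u
  · obtain ⟨c, hc⟩ := hstar
    have heq := star_case T hT hn c hc
    exact ⟨le_of_eq heq, fun _ => heq⟩
  · constructor
    · -- every degree is at most n-2
      have hdegle : ∀ v, T.degree v ≤ n - 2 := by
        intro v
        by_contra h
        push_neg at h
        have hlt : T.degree v < n := T.degree_lt_card_verts v
        have hdeq : T.degree v = n - 1 := by omega
        have hsub : T.neighborFinset v ⊆ Finset.univ.erase v := by
          intro u hu
          rw [SimpleGraph.mem_neighborFinset] at hu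
          exact Finset.mem_erase.mpr ⟨hu.ne', Finset.mem_univ u⟩
        have hcard : (Finset.univ.erase v).card ≤ (T.neighborFinset v).card := by
          rw [Finset.card_erase_of_mem (Finset.mem_univ v), Finset.card_univ,
            SimpleGraph.card_neighborFinset_eq_degree, hdeq]
        have heqF := Finset.eq_of_subset_of_card_le hsub hcard
        exact hstar ⟨v, fun u hu => by
          have : u ∈ T.neighborFinset v := heqF ▸ Finset.mem_erase.mpr ⟨hu, Finset.mem_univ u⟩
          exact (SimpleGraph.mem_neighborFinset _ _ _).mp this⟩
      have hdeg1 : ∀ v, 1 ≤ T.degree v := by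
        intro v
        obtain ⟨w, hw⟩ := exists_adj_of_connected T hT.isConnected (by omega) v
        exact SimpleGraph.degree_pos_iff_exists_adj T v |>.mpr ⟨w, hw⟩
      have hsum : ∑ v, T.degree v = 2 * (n - 1) := by
        rw [SimpleGraph.sum_degrees_eq_twice_card_edges]
        have := hT.card_edgeFinset
        omega
      have hsum1 : ∑ v, (T.degree v - 1) = n - 2 := by
        have h1 : ∑ v, T.degree v = (∑ v, (T.degree v - 1)) + n := by
          rw [Finset.sum_congr rfl (fun v _ =>
            (by have := hdeg1 v; omega : T.degree v = (T.degree v - 1) + 1)),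
            Finset.sum_add_distrib, Finset.sum_const, Finset.card_univ, smul_eq_mul, mul_one]
        omega
      have hpt : ∀ v, T.degree v ^ 2 ≤ T.degree v + (n - 2) * (T.degree v - 1) := by
        intro v
        obtain ⟨e, he⟩ : ∃ e, T.degree v = e + 1 := ⟨T.degree v - 1, by have := hdeg1 v; omega⟩
        rw [he]
        have h1 : (e + 1) ^ 2 = (e + 1) + (e + 1) * e := by ring
        have h2 : (e + 1) * e ≤ (n - 2) * e :=
          Nat.mul_le_mul_right e (he ▸ hdegle v)
        simp only [Nat.add_sub_cancel]
        omega
      have hM1le : M1 T ≤ n + (n - 1) * (n - 2) := by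
        calc M1 T = ∑ v, T.degree v ^ 2 :=
              Finset.sum_congr rfl (fun v _ => by rw [deg_eq_degree])
          _ ≤ ∑ v, (T.degree v + (n - 2) * (T.degree v - 1)) :=
              Finset.sum_le_sum (fun v _ => hpt v)
          _ = (∑ v, T.degree v) + (n - 2) * ∑ v, (T.degree v - 1) := by
              rw [Finset.sum_add_distrib, Finset.mul_sum]
          _ = 2 * (n - 1) + (n - 2) * (n - 2) := by rw [hsum, hsum1]
          _ = n + (n - 1) * (n - 2) := by
              obtain ⟨m, hm⟩ : ∃ m, n = m + 4 := ⟨n - 4, by omega⟩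
              rw [hm]
              have e1 : m + 4 - 1 = m + 3 := rfl
              have e2 : m + 4 - 2 = m + 2 := rfl
              rw [e1, e2]; ring
      exact le_trans hM1le (Nat.le_add_right _ _)
    · rintro ⟨φ⟩
      exfalso
      apply hstar
      have hpos : 0 < n := by omega
      refine ⟨φ.symm ⟨0, hpos⟩, fun u hu => ?_⟩
      rw [← φ.map_adj_iff]
      refine ⟨fun h => hu ?_, Or.inl (by rw [φ.apply_symm_apply])⟩
      exact (φ.toEquiv.injective h).symm
end
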